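/- Let A be the generator of a bounded holomorphic semigroup S(t) on a Banach space E satisfying ‖A^α S(t)‖ ≤ C_α t^{-α} for all t > 0 and α ∈ [0, 1]. Let f : (0, T] → E be continuous with ‖f(s)‖ ≤ N s^{γ+δ-1} for constants N ≥ 0, γ + δ > 0. Then for γ ≤ α < 1 - δ, the function v(t) = ∫₀ᵗ A^{α+δ} S(t-s) f(s) ds satisfies ‖v(t)‖ ≤ C_{α+δ} N B(1 - δ - α, γ + δ) t^{γ-α} for all t ∈ (0, T]. -/

import Mathlib

open MeasureTheory

/-- Euler Beta function `B(x,y) = ∫₀¹ s^(x-1) (1-s)^(y-1) ds`. -/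
noncomputable def eulerBeta (x y : ℝ) : ℝ :=
  ∫ s in (0:ℝ)..1, s ^ (x - 1) * (1 - s) ^ (y - 1)

lemma integrable_aux {p q t : ℝ} (ht : 0 < t) (hp : -1 < p) (hq : -1 < q) :
    IntervalIntegrable (fun s => (t - s) ^ q * s ^ p) volume 0 t := by
  have ht2 : (0:ℝ) < t / 2 := by linarith
  have h1 : IntervalIntegrable (fun s => (t - s) ^ q * s ^ p) volume 0 (t / 2) := by
    apply IntervalIntegrable.continuousOn_mul (intervalIntegral.intervalIntegrable_rpow' hp)
    apply ContinuousOn.rpow_const ((continuous_const.sub continuous_id).continuousOn)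
    intro x hx
    rw [Set.uIcc_of_le (by linarith)] at hx
    exact Or.inl (ne_of_gt (by show 0 < t - x; nlinarith [hx.2]))
  have h2 : IntervalIntegrable (fun s => (t - s) ^ q * s ^ p) volume (t / 2) t := by
    apply IntervalIntegrable.mul_continuousOn
    · have h := (intervalIntegral.intervalIntegrable_rpow' (a := t / 2) (b := 0) hq).comp_sub_left t
      simp only [sub_zero] at h
      rw [show t - t / 2 = t / 2 by ring] at h
      exact h
    · apply ContinuousOn.rpow_const continuousOn_id
      intro x hx
      rw [Set.uIcc_of_le (by linarith)] at hx
      exact Or.inl (by simp only [id]; nlinarith [hx.1])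
  exact h1.trans h2

lemma value_aux {p q t : ℝ} (ht : 0 < t) :
    (∫ s in (0:ℝ)..t, (t - s) ^ q * s ^ p)
      = t ^ (q + p + 1) * ∫ u in (0:ℝ)..1, u ^ q * (1 - u) ^ p := by
  have h1 : (∫ s in (0:ℝ)..t, (t - s) ^ q * s ^ p)
      = ∫ x in (0:ℝ)..t, x ^ q * (t - x) ^ p := by
    have h := intervalIntegral.integral_comp_sub_left (a := 0) (b := t)
      (fun x => x ^ q * (t - x) ^ p) t
    simp only [sub_zero, sub_self] at h
    rw [← h]
    apply intervalIntegral.integral_congr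
    intro x _
    simp [sub_sub_cancel]
  rw [h1]
  have h2 := intervalIntegral.smul_integral_comp_mul_left (a := 0) (b := 1)
    (fun x => x ^ q * (t - x) ^ p) t
  simp only [mul_zero, mul_one] at h2
  rw [← h2]
  have h3 : (∫ u in (0:ℝ)..1, (t * u) ^ q * (t - t * u) ^ p)
      = ∫ u in (0:ℝ)..1, t ^ (q + p) * (u ^ q * (1 - u) ^ p) := by
    apply intervalIntegral.integral_congr
    intro u hu
    rw [Set.uIcc_of_le (by norm_num)] at hu
    dsimp only
    have hu0 : 0 ≤ u := hu.1
    have hu1 : 0 ≤ 1 - u := by linarith [hu.2]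
    have e1 : (t * u) ^ q = t ^ q * u ^ q := Real.mul_rpow ht.le hu0
    have e2 : t - t * u = t * (1 - u) := by ring
    have e3 : (t * (1 - u)) ^ p = t ^ p * (1 - u) ^ p := Real.mul_rpow ht.le hu1
    rw [e1, e2, e3, Real.rpow_add ht]
    ring
  rw [h3, intervalIntegral.integral_const_mul, smul_eq_mul, ← mul_assoc]
  congr 1
  rw [Real.rpow_add ht, Real.rpow_add ht, Real.rpow_one]
  rw [Real.rpow_add ht]
  ring

/-- Duhamel estimate in the Fujita–Kato iteration: `AS β t` stands for the
bounded operator `A^β S(t)`, with smoothing bound `‖A^β S(t)‖ ≤ C_β t^{-β}`. -/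
theorem stmt6 {E : Type*} [NormedAddCommGroup E] [NormedSpace ℝ E] [CompleteSpace E]
    (T : ℝ) (hT : 0 < T)
    (AS : ℝ → ℝ → E →L[ℝ] E) (C : ℝ → ℝ) (hC : ∀ β, 0 < C β)
    (hAS : ∀ β : ℝ, 0 ≤ β → ∀ t : ℝ, 0 < t → ∀ u : E, ‖AS β t u‖ ≤ C β * t ^ (-β) * ‖u‖)
    (f : ℝ → E) (N γ δ α : ℝ) (hN : 0 ≤ N) (hγδ : 0 < γ + δ) (hδ : 0 ≤ δ)
    (hf : ContinuousOn f (Set.Ioc 0 T))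
    (hfN : ∀ s ∈ Set.Ioc (0:ℝ) T, ‖f s‖ ≤ N * s ^ (γ + δ - 1))
    (hα1 : γ ≤ α) (hα2 : α < 1 - δ) :
    ∀ t ∈ Set.Ioc (0:ℝ) T,
      ‖∫ s in (0:ℝ)..t, AS (α + δ) (t - s) (f s)‖ ≤
        C (α + δ) * N * eulerBeta (1 - δ - α) (γ + δ) * t ^ (γ - α) := by
  intro t ht
  obtain ⟨ht0, htT⟩ := ht
  have hβ0 : 0 < α + δ := lt_of_lt_of_le hγδ (by linarith)
  have hβ1 : α + δ < 1 := by linarith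
  have hp : -1 < γ + δ - 1 := by linarith
  have hq : -1 < -(α + δ) := by linarith
  set g : ℝ → ℝ := fun s => C (α + δ) * N * ((t - s) ^ (-(α + δ)) * s ^ (γ + δ - 1)) with hg
  have hInt : IntervalIntegrable g volume 0 t :=
    (integrable_aux ht0 hp hq).const_mul _
  have hbound : ∀ᵐ s ∂volume.restrict (Set.uIoc 0 t),
      ‖AS (α + δ) (t - s) (f s)‖ ≤ g s := by
    rw [Set.uIoc_of_le ht0.le,
      ← MeasureTheory.Measure.restrict_congr_set Ioo_ae_eq_Ioc]
    filter_upwards [ae_restrict_mem measurableSet_Ioo] with s hs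
    have hts : 0 < t - s := by linarith [hs.2]
    have h1 := hAS (α + δ) hβ0.le (t - s) hts (f s)
    have h2 := hfN s ⟨hs.1, le_trans hs.2.le htT⟩
    calc ‖AS (α + δ) (t - s) (f s)‖ ≤ C (α + δ) * (t - s) ^ (-(α + δ)) * ‖f s‖ := h1
      _ ≤ C (α + δ) * (t - s) ^ (-(α + δ)) * (N * s ^ (γ + δ - 1)) := by
          exact mul_le_mul_of_nonneg_left h2
            (mul_nonneg (hC _).le (Real.rpow_nonneg hts.le _))
      _ = g s := by rw [hg]; ring
  have key := intervalIntegral.norm_integral_le_abs_of_norm_le hbound hInt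
  have hval : (∫ s in (0:ℝ)..t, g s)
      = C (α + δ) * N * eulerBeta (1 - δ - α) (γ + δ) * t ^ (γ - α) := by
    rw [hg]
    rw [intervalIntegral.integral_const_mul, value_aux ht0]
    have e1 : -(α + δ) + (γ + δ - 1) + 1 = γ - α := by ring
    have e2 : (∫ u in (0:ℝ)..1, u ^ (-(α + δ)) * (1 - u) ^ (γ + δ - 1))
        = eulerBeta (1 - δ - α) (γ + δ) := by
      rw [eulerBeta]
      apply intervalIntegral.integral_congr
      intro u _
      norm_num
      left
      congr 1
      ring
    rw [e1, e2]
    ring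
  rw [hval] at key
  calc ‖∫ s in (0:ℝ)..t, AS (α + δ) (t - s) (f s)‖
      ≤ |C (α + δ) * N * eulerBeta (1 - δ - α) (γ + δ) * t ^ (γ - α)| := key
    _ = C (α + δ) * N * eulerBeta (1 - δ - α) (γ + δ) * t ^ (γ - α) := by
        apply abs_of_nonneg
        apply mul_nonneg
        apply mul_nonneg (mul_nonneg (hC _).le hN)
        · rw [eulerBeta]
          apply intervalIntegral.integral_nonneg (by norm_num)
          intro u hu
          exact mul_nonneg (Real.rpow_nonneg hu.1 _)
            (Real.rpow_nonneg (by linarith [hu.2]) _)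
        · exact Real.rpow_nonneg ht0.le _
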